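/- Let T be an A-bounded operator, suppose the range of A has dimension at least 3, and let q ∈ D. Then W_{q,A}(T) = ⋃_{x ∈ H, ‖x‖_A = 1} { a ∈ ℂ : |a − q⟨Tx,x⟩_A| ≤ √(1−|q|²) · (‖Tx‖_A² − |⟨Tx,x⟩_A|²)^{1/2} }. -/

import Mathlib

noncomputable section

open Filter

variable {H : Type*} [NormedAddCommGroup H] [InnerProductSpace ℂ H] [CompleteSpace H]

/-- The paper's semi-inner product `⟨x, y⟩_A = ⟨A x, y⟩`, where the inner product of the
paper is linear in the *first* argument; in Mathlib's convention this is `⟪y, A x⟫_ℂ`. -/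
def sipA (A : H →L[ℂ] H) (x y : H) : ℂ := inner ℂ y (A x)

/-- The `A`-seminorm `‖x‖_A = ⟨A x, x⟩ ^ (1/2)`. -/
def semiNormA (A : H →L[ℂ] H) (x : H) : ℝ := Real.sqrt (sipA A x x).re

/-- The `A`-`q`-numerical range `W_{q,A}(T)`. -/
def WqA (A : H →L[ℂ] H) (q : ℂ) (T : H →L[ℂ] H) : Set ℂ :=
  {z | ∃ x y : H, semiNormA A x = 1 ∧ semiNormA A y = 1 ∧ sipA A x y = q ∧ z = sipA A (T x) y}

/-- The `A`-`q`-numerical radius `w_{q,A}(T)`. -/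
def wqA (A : H →L[ℂ] H) (q : ℂ) (T : H →L[ℂ] H) : ℝ := sSup ((norm : ℂ → ℝ) '' WqA A q T)

/-- The `A`-operator seminorm `‖T‖_A = sup {‖T x‖_A : ‖x‖_A ≤ 1}`. -/
def opNormA (A T : H →L[ℂ] H) : ℝ :=
  sSup ((fun x => semiNormA A (T x)) '' {x : H | semiNormA A x ≤ 1})

/-- `T` is `A`-bounded: `‖T x‖_A ≤ c ‖x‖_A` for some `c > 0`. -/
def ABounded (A T : H →L[ℂ] H) : Prop := ∃ c > 0, ∀ x : H, semiNormA A (T x) ≤ c * semiNormA A x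

open scoped InnerProductSpace ComplexConjugate

lemma normProj {e : H} (v : H) (he : ‖e‖ = 1) :
    ‖v - (⟪e, v⟫_ℂ) • e‖ ^ 2 = ‖v‖ ^ 2 - ‖⟪e, v⟫_ℂ‖ ^ 2 := by
  have h := @norm_sub_sq ℂ H _ _ _ v ((⟪e, v⟫_ℂ) • e)
  rw [inner_smul_right, norm_smul, he, ← inner_conj_symm v e] at h
  have hre : RCLike.re (⟪e, v⟫_ℂ * conj ⟪e, v⟫_ℂ) = ‖⟪e, v⟫_ℂ‖ ^ 2 := by
    rw [Complex.mul_conj]; simp [Complex.normSq_eq_norm_sq]; norm_cast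
  rw [h, hre]
  simp only [mul_one]
  ring

lemma fwd {e v u : H} (he : ‖e‖ = 1) (hv : ‖v‖ = 1) :
    ‖⟪v, u⟫_ℂ - ⟪v, e⟫_ℂ * ⟪e, u⟫_ℂ‖ ≤
      Real.sqrt (1 - ‖⟪v, e⟫_ℂ‖ ^ 2) *
        Real.sqrt (‖u‖ ^ 2 - ‖⟪e, u⟫_ℂ‖ ^ 2) := by
  set r := v - (⟪e, v⟫_ℂ) • e with hr
  set u' := u - (⟪e, u⟫_ℂ) • e with hu'
  have her : ⟪e, r⟫_ℂ = 0 := by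
    simp [hr, inner_sub_right, inner_smul_right, inner_self_eq_norm_sq_to_K, he]
  have hinner : ⟪r, u'⟫_ℂ = ⟪v, u⟫_ℂ - ⟪v, e⟫_ℂ * ⟪e, u⟫_ℂ := by
    have hre : ⟪r, e⟫_ℂ = 0 := by rw [← inner_conj_symm, her, map_zero]
    rw [hu', inner_sub_right, inner_smul_right, hre, mul_zero, sub_zero, hr,
      inner_sub_left, inner_smul_left, ← inner_conj_symm v e]
  have hnr : ‖r‖ = Real.sqrt (1 - ‖⟪v, e⟫_ℂ‖ ^ 2) := by
    have habs : ‖⟪v, e⟫_ℂ‖ = ‖⟪e, v⟫_ℂ‖ := by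
      rw [← inner_conj_symm v e, Complex.norm_conj]
    have h2 : ‖r‖ ^ 2 = 1 - ‖⟪e, v⟫_ℂ‖ ^ 2 := by
      rw [hr, normProj v he, hv, one_pow]
    rw [habs, ← h2, Real.sqrt_sq (norm_nonneg _)]
  have hnu : ‖u'‖ = Real.sqrt (‖u‖ ^ 2 - ‖⟪e, u⟫_ℂ‖ ^ 2) := by
    rw [← normProj u he, Real.sqrt_sq (norm_nonneg _)]
  calc ‖⟪v, u⟫_ℂ - ⟪v, e⟫_ℂ * ⟪e, u⟫_ℂ‖ = ‖⟪r, u'⟫_ℂ‖ := by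
        rw [hinner]
    _ ≤ ‖r‖ * ‖u'‖ := norm_inner_le_norm r u'
    _ = _ := by rw [hnr, hnu]

set_option maxHeartbeats 1000000 in
lemma bwd {e u w : H} (he : ‖e‖ = 1) (hw : ‖w‖ = 1) (hwe : ⟪w, e⟫_ℂ = 0) (hwu : ⟪w, u⟫_ℂ = 0)
    {q a : ℂ} (hq : ‖q‖ ≤ 1)
    (ha : ‖a - q * ⟪e, u⟫_ℂ‖ ≤
      Real.sqrt (1 - ‖q‖ ^ 2) * Real.sqrt (‖u‖ ^ 2 - ‖⟪e, u⟫_ℂ‖ ^ 2)) :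
    ∃ v : H, (∃ α l μ : ℂ, v = α • e + l • (u - ⟪e, u⟫_ℂ • e) + μ • w) ∧
      ‖v‖ = 1 ∧ ⟪v, e⟫_ℂ = q ∧ ⟪v, u⟫_ℂ = a := by
  set β := ⟪e, u⟫_ℂ with hβ
  set s := u - β • e with hs
  set m := ‖s‖ with hm
  set c := a - q * β with hc
  have hq2 : (0:ℝ) ≤ 1 - ‖q‖ ^ 2 := by nlinarith [norm_nonneg q]
  have hm2 : Real.sqrt (‖u‖ ^ 2 - ‖β‖ ^ 2) = m := by
    rw [← normProj u he, Real.sqrt_sq (norm_nonneg _)]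
  have ha' : ‖c‖ ≤ Real.sqrt (1 - ‖q‖ ^ 2) * m := by
    rw [← hm2]; exact ha
  have hm0 : (0:ℝ) ≤ m := norm_nonneg _
  have hcm : m = 0 → c = 0 := by
    intro h0
    rw [h0, mul_zero] at ha'
    exact norm_eq_zero.mp (le_antisymm ha' (norm_nonneg c))
  have key : ‖c‖ ^ 2 / m ^ 2 ≤ 1 - ‖q‖ ^ 2 := by
    rcases eq_or_lt_of_le hm0 with h0 | h0
    · rw [hcm h0.symm]; simp [hq2]
    · rw [div_le_iff₀ (by positivity)]
      have h3 := mul_le_mul ha' ha' (norm_nonneg c) (by positivity)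
      nlinarith [Real.sq_sqrt hq2, sq_nonneg (‖c‖)]
  have hrad : (0:ℝ) ≤ 1 - ‖q‖ ^ 2 - ‖c‖ ^ 2 / m ^ 2 := by linarith
  set μr := Real.sqrt (1 - ‖q‖ ^ 2 - ‖c‖ ^ 2 / m ^ 2) with hμr
  set l : ℂ := conj c / ((m:ℂ) ^ 2) with hl
  -- orthogonality facts
  have hes : ⟪e, s⟫_ℂ = 0 := by
    simp [hs, hβ, inner_sub_right, inner_smul_right, inner_self_eq_norm_sq_to_K, he]
  have hse : ⟪s, e⟫_ℂ = 0 := by rw [← inner_conj_symm, hes, map_zero]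
  have hws : ⟪w, s⟫_ℂ = 0 := by
    simp [hs, inner_sub_right, inner_smul_right, hwu, hwe]
  have hsw : ⟪s, w⟫_ℂ = 0 := by rw [← inner_conj_symm, hws, map_zero]
  have hew : ⟪e, w⟫_ℂ = 0 := by rw [← inner_conj_symm, hwe, map_zero]
  have hss : ⟪s, s⟫_ℂ = ((m:ℂ)) ^ 2 := by
    rw [inner_self_eq_norm_sq_to_K, hm]; norm_cast
  have hlc : conj l * ((m:ℂ)) ^ 2 = c := by
    rcases eq_or_lt_of_le hm0 with h0 | h0
    · rw [hcm h0.symm, ← h0]; simp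
    · have hmne : ((m:ℂ)) ^ 2 ≠ 0 := by
        exact pow_ne_zero 2 (Complex.ofReal_ne_zero.mpr (ne_of_gt h0))
      rw [hl, map_div₀, Complex.conj_conj, map_pow, Complex.conj_ofReal]
      have hm1 : (m:ℂ) ≠ 0 := Complex.ofReal_ne_zero.mpr (ne_of_gt h0)
      field_simp
  set v := (conj q) • e + l • s + (μr : ℂ) • w with hv
  have hve : ⟪v, e⟫_ℂ = q := by
    rw [hv, inner_add_left, inner_add_left, inner_smul_left, inner_smul_left, inner_smul_left,
      hse, hwe, inner_self_eq_norm_sq_to_K, he]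
    simp
  have hvu : ⟪v, u⟫_ℂ = a := by
    have hu : u = s + β • e := by rw [hs]; abel
    conv_lhs => rw [hu]
    rw [inner_add_right, inner_smul_right, hve, hv, inner_add_left, inner_add_left,
      inner_smul_left, inner_smul_left, inner_smul_left, hes, hss, hws, hlc]
    simp only [mul_zero, zero_add, add_zero]
    rw [hc]; ring
  refine ⟨v, ⟨conj q, l, (μr : ℂ), hv⟩, ?_, hve, hvu⟩
  have h1 : ‖(conj q) • e + l • s‖ ^ 2 = ‖(conj q) • e‖ ^ 2 + ‖l • s‖ ^ 2 := by
    rw [@norm_add_sq ℂ]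
    rw [inner_smul_left, inner_smul_right, hes]
    simp
  have h2 : ‖v‖ ^ 2 = ‖(conj q) • e‖ ^ 2 + ‖l • s‖ ^ 2 + ‖(μr : ℂ) • w‖ ^ 2 := by
    rw [hv, @norm_add_sq ℂ, h1]
    have hz : ⟪(conj q) • e + l • s, (μr : ℂ) • w⟫_ℂ = 0 := by
      rw [inner_add_left, inner_smul_left, inner_smul_left, inner_smul_right, inner_smul_right,
        hew, hsw]
      ring
    rw [hz]
    simp
  have hls : ‖l • s‖ ^ 2 = ‖c‖ ^ 2 / m ^ 2 := by
    rcases eq_or_lt_of_le hm0 with h0 | h0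
    · have hs0 : s = 0 := by
        have h4 : m = 0 := h0.symm
        rw [hm] at h4; exact norm_eq_zero.mp h4
      rw [hs0, smul_zero, norm_zero, hcm h0.symm]
      simp
    · rw [norm_smul, hl, norm_div, Complex.norm_conj, ← hm]
      have h5 : ‖((m:ℂ) ^ 2)‖ = m ^ 2 := by
        rw [norm_pow, Complex.norm_of_nonneg hm0]
      rw [h5]
      field_simp
  have hμ2 : ‖(μr : ℂ) • w‖ ^ 2 = 1 - ‖q‖ ^ 2 - ‖c‖ ^ 2 / m ^ 2 := by
    rw [norm_smul, hw, mul_one,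
      Complex.norm_of_nonneg (Real.sqrt_nonneg _), Real.sq_sqrt hrad]
  have hqe : ‖(conj q) • e‖ ^ 2 = ‖q‖ ^ 2 := by
    rw [norm_smul, he, mul_one, Complex.norm_conj]
  have hfin : ‖v‖ ^ 2 = 1 := by rw [h2, hls, hμ2, hqe]; ring
  nlinarith [norm_nonneg v]

lemma exists_w (A B : H →L[ℂ] H) [CompleteSpace H] (hmul : B * B = A) (hsa : IsSelfAdjoint B)
    (hrank : 3 ≤ Module.rank ℂ (LinearMap.range A.toLinearMap)) (x t : H) :
    ∃ w : H, ⟪B w, B x⟫_ℂ = 0 ∧ ⟪B w, B t⟫_ℂ = 0 ∧ ‖B w‖ = 1 := by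
  have hBB : ∀ u v : H, ⟪B u, B v⟫_ℂ = ⟪u, A v⟫_ℂ := by
    intro u v
    have h := ContinuousLinearMap.adjoint_inner_right B u (B v)
    rw [hsa.adjoint_eq] at h
    rw [← h, ← ContinuousLinearMap.mul_apply, hmul]
  have hw0 : ∃ w : H, ⟪w, A x⟫_ℂ = 0 ∧ ⟪w, A t⟫_ℂ = 0 ∧ B w ≠ 0 := by
    by_contra hcon
    push_neg at hcon
    set K : Submodule ℂ H := Submodule.span ℂ {A x, A t} with hK
    haveI : FiniteDimensional ℂ K :=
      FiniteDimensional.span_of_finite ℂ ((Set.finite_singleton (A t)).insert (A x))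
    have hzero : ∀ w ∈ Kᗮ, A w = 0 := by
      intro w hw
      have h1 : ⟪w, A x⟫_ℂ = 0 :=
        inner_eq_zero_symm.mp ((Submodule.mem_orthogonal K w).mp hw (A x)
          (Submodule.subset_span (by simp)))
      have h2 : ⟪w, A t⟫_ℂ = 0 :=
        inner_eq_zero_symm.mp ((Submodule.mem_orthogonal K w).mp hw (A t)
          (Submodule.subset_span (by simp)))
      have h3 : B w = 0 := hcon w h1 h2
      rw [← hmul, ContinuousLinearMap.mul_apply, h3, map_zero]
    have hle : LinearMap.range A.toLinearMap ≤ K.map A.toLinearMap := by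
      rintro y ⟨v, rfl⟩
      obtain ⟨k, hk, z, hz, rfl⟩ := K.exists_add_mem_mem_orthogonal v
      refine ⟨k, hk, ?_⟩
      have : A z = 0 := hzero z hz
      simp [map_add, this]
    have hcard : (Cardinal.mk ({A x, A t} : Set H)) ≤ 2 := by
      refine (Cardinal.mk_insert_le).trans ?_
      rw [Cardinal.mk_singleton]
      norm_num
    have h5 : Module.rank ℂ (K.map A.toLinearMap) ≤ 2 :=
      (rank_map_le _ _).trans ((rank_span_le _).trans hcard)
    have := hrank.trans ((Submodule.rank_mono hle).trans h5)
    norm_num at this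
  obtain ⟨w0, h1, h2, h3⟩ := hw0
  have hr : ‖B w0‖ ≠ 0 := fun h => h3 (norm_eq_zero.mp h)
  refine ⟨((‖B w0‖⁻¹ : ℝ) : ℂ) • w0, ?_, ?_, ?_⟩
  · rw [map_smul, inner_smul_left, hBB, h1, mul_zero]
  · rw [map_smul, inner_smul_left, hBB, h2, mul_zero]
  · rw [map_smul, norm_smul,
        Complex.norm_of_nonneg (inv_nonneg.mpr (norm_nonneg _)), inv_mul_cancel₀ hr]

set_option maxHeartbeats 1000000 in
theorem stmt_5 (A : H →L[ℂ] H) (hA : A.IsPositive)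
    (hrank : 3 ≤ Module.rank ℂ (LinearMap.range A.toLinearMap))
    (T : H →L[ℂ] H) (hT : ABounded A T)
    (q : ℂ) (hq : ‖q‖ ≤ 1) :
    WqA A q T = ⋃ x ∈ {x : H | semiNormA A x = 1},
      {a : ℂ | ‖a - q * sipA A (T x) x‖ ≤
        Real.sqrt (1 - ‖q‖ ^ 2) *
          Real.sqrt (semiNormA A (T x) ^ 2 - ‖sipA A (T x) x‖ ^ 2)} := by
  obtain ⟨B, hsa, hmul, hsip, hsn⟩ :
      ∃ B : H →L[ℂ] H, IsSelfAdjoint B ∧ B * B = A ∧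
        (∀ u v : H, sipA A u v = ⟪B v, B u⟫_ℂ) ∧ (∀ v : H, semiNormA A v = ‖B v‖) := by
    have h0 : (0 : H →L[ℂ] H) ≤ A := (ContinuousLinearMap.nonneg_iff_isPositive A).2 hA
    have hsa : IsSelfAdjoint (CFC.sqrt A) := IsSelfAdjoint.of_nonneg (CFC.sqrt_nonneg A)
    have hmul : CFC.sqrt A * CFC.sqrt A = A := CFC.sqrt_mul_sqrt_self A h0
    have hsip : ∀ u v : H, sipA A u v = ⟪CFC.sqrt A v, CFC.sqrt A u⟫_ℂ := by
      intro u v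
      show (inner ℂ v (A u) : ℂ) = _
      conv_lhs => rw [← hmul]
      rw [ContinuousLinearMap.mul_apply, ← ContinuousLinearMap.adjoint_inner_right,
        hsa.adjoint_eq]
    refine ⟨CFC.sqrt A, hsa, hmul, hsip, fun v => ?_⟩
    show Real.sqrt (sipA A v v).re = _
    rw [hsip v v, inner_self_eq_norm_sq_to_K]
    norm_cast
    exact Real.sqrt_sq (norm_nonneg _)
  ext z
  simp only [WqA, Set.mem_setOf_eq, Set.mem_iUnion, exists_prop]
  constructor
  · rintro ⟨x, y, hx, hy, hxy, rfl⟩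
    refine ⟨x, hx, ?_⟩
    rw [hsn] at hx hy
    rw [hsip] at hxy
    rw [hsip, hsip, hsn]
    rw [← hxy]
    exact fwd hx hy
  · rintro ⟨x, hx, haz⟩
    rw [hsn] at hx
    rw [hsip, hsn] at haz
    obtain ⟨w, hw1, hw2, hw3⟩ := exists_w A B hmul hsa hrank x (T x)
    obtain ⟨v, ⟨α, l, μ, hvdef⟩, hv1, hv2, hv3⟩ :=
      bwd (e := B x) (u := B (T x)) (w := B w) hx hw3 hw1 hw2 hq haz
    set y : H := α • x + l • (T x - (⟪B x, B (T x)⟫_ℂ) • x) + μ • w with hy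
    have hBy : B y = v := by
      rw [hy, hvdef]
      simp [map_add, map_smul, map_sub]
    refine ⟨x, y, ?_, ?_, ?_, ?_⟩
    · rw [hsn]; exact hx
    · rw [hsn, hBy]; exact hv1
    · rw [hsip, hBy]; exact hv2
    · rw [hsip, hBy]; exact hv3.symm
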